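/- Balls and bins with filtering: throw n balls, each independently discarded with probability 1-p (with 0 < p ≤ 1/(2r), r ≥ 2) and otherwise placed uniformly at random into one of u ≥ 8 bins. Fix bin j. Then the probability that bin j contains at least two balls and all other u-1 bins are empty is at most 1/u². -/

import Mathlib

set_option maxHeartbeats 1000000

open MeasureTheory ProbabilityTheory

lemma aux1 (t : ℝ) : t * Real.exp (-t) ≤ Real.exp (-1) := by
  have h := Real.add_one_le_exp (t - 1)
  have h2 : Real.exp (t - 1) * Real.exp (-t) = Real.exp (-1) := by
    rw [← Real.exp_add]; ring_nf
  nlinarith [Real.exp_pos (-t)]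

lemma aux2 (x : ℝ) (hx : 0 ≤ x) :
    x ^ 2 * Real.exp (-(7 / 8 * x)) ≤ 256 / 49 * Real.exp (-1) ^ 2 := by
  have h := aux1 (7 / 16 * x)
  have hsq : Real.exp (-(7 / 16 * x)) ^ 2 = Real.exp (-(7 / 8 * x)) := by
    rw [sq, ← Real.exp_add]; ring_nf
  have hkey : x ^ 2 * Real.exp (-(7 / 8 * x)) =
      (16 / 7) ^ 2 * (7 / 16 * x * Real.exp (-(7 / 16 * x))) ^ 2 := by
    rw [mul_pow, mul_pow, hsq]; ring
  rw [hkey]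
  have h0 : 0 ≤ 7 / 16 * x * Real.exp (-(7 / 16 * x)) := by positivity
  nlinarith [pow_le_pow_left₀ h0 h 2]

lemma real_key (n : ℕ) (u p : ℝ) (hu : 8 ≤ u) (hp0 : 0 < p) (hp : p ≤ 1 / 4) :
    (n.choose 2 : ℝ) * p ^ 2 * (1 - p + p / u) ^ (n - 2) ≤ 1 := by
  rcases lt_or_ge n 2 with hn | hn
  · interval_cases n <;> norm_num
  · have hu0 : (0 : ℝ) < u := by linarith
    set q : ℝ := 1 - p + p / u with hqdef
    have hpu : p / u ≤ p / 8 :=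
      div_le_div_of_nonneg_left hp0.le (by norm_num) hu
    have hpu0 : 0 ≤ p / u := by positivity
    have hq0 : 0 ≤ q := by rw [hqdef]; nlinarith
    have hq : q ≤ Real.exp (-(7 / 8 * p)) := by
      have := Real.add_one_le_exp (-(7 / 8 * p))
      rw [hqdef]; nlinarith
    have hqn : q ^ (n - 2) ≤ Real.exp (-(7 / 8 * p)) ^ (n - 2) :=
      pow_le_pow_left₀ hq0 hq _
    have hexp : Real.exp (-(7 / 8 * p)) ^ (n - 2)
        = Real.exp (-(7 / 8 * p) * (n - 2 : ℕ)) := by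
      rw [← Real.exp_nat_mul]; ring_nf
    have hcast : ((n - 2 : ℕ) : ℝ) = (n : ℝ) - 2 := by
      push_cast [Nat.cast_sub hn]; ring
    set x : ℝ := n * p with hxdef
    have hx0 : 0 ≤ x := by positivity
    have hsplit : Real.exp (-(7 / 8 * p) * (n - 2 : ℕ))
        = Real.exp (-(7 / 8 * x)) * Real.exp (7 / 4 * p) := by
      rw [← Real.exp_add, hcast, hxdef]; ring_nf
    have hep : Real.exp (7 / 4 * p) ≤ Real.exp (7 / 16) :=
      Real.exp_le_exp.2 (by linarith)
    have hC : (n.choose 2 : ℝ) ≤ (n : ℝ) ^ 2 / 2 := by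
      have heven : Even (n * (n - 1)) := by
        rcases Nat.even_or_odd n with h | h
        · exact h.mul_right _
        · exact ((Nat.Odd.sub_odd h odd_one)).mul_left _
      have h2 : n.choose 2 * 2 = n * (n - 1) := by
        rw [Nat.choose_two_right]
        exact Nat.div_mul_cancel heven.two_dvd
      have h1 : (n.choose 2 : ℝ) * 2 = (n : ℝ) * ((n : ℝ) - 1) := by
        have := congrArg (fun k : ℕ => (k : ℝ)) h2
        push_cast [Nat.cast_sub (by omega : 1 ≤ n)] at this
        linarith
      nlinarith [(by positivity : (0:ℝ) ≤ (n.choose 2 : ℝ))]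
    have haux2 := aux2 x hx0
    have h27 : (27/10 : ℝ) ≤ Real.exp 1 := by nlinarith [Real.exp_one_gt_d9]
    have he1 : Real.exp (-1) ≤ 10 / 27 := by
      rw [Real.exp_neg]
      calc (Real.exp 1)⁻¹ ≤ (27/10 : ℝ)⁻¹ := by
            apply inv_anti₀ (by norm_num) h27
        _ ≤ 10 / 27 := by norm_num
    have hee : Real.exp (7 / 16) ≤ 68/25 := by
      calc Real.exp (7 / 16) ≤ Real.exp 1 := Real.exp_le_exp.2 (by norm_num)
        _ ≤ 68/25 := by nlinarith [Real.exp_one_lt_d9]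
    set E : ℝ := Real.exp (-(7 / 8 * x)) with hE
    set F : ℝ := Real.exp (7 / 16) with hF
    have hE0 : 0 ≤ E := (Real.exp_pos _).le
    have hF0 : 0 ≤ F := (Real.exp_pos _).le
    have step1 : (n.choose 2 : ℝ) * p ^ 2 * q ^ (n - 2)
        ≤ (x ^ 2 / 2) * (E * F) := by
      have hqn' : q ^ (n - 2) ≤ E * F := by
        calc q ^ (n - 2) ≤ Real.exp (-(7 / 8 * p)) ^ (n - 2) := hqn
          _ = E * Real.exp (7 / 4 * p) := by rw [hexp, hsplit]
          _ ≤ E * F := mul_le_mul_of_nonneg_left hep hE0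
      have hCp : (n.choose 2 : ℝ) * p ^ 2 ≤ x ^ 2 / 2 := by
        calc (n.choose 2 : ℝ) * p ^ 2 ≤ ((n : ℝ) ^ 2 / 2) * p ^ 2 :=
              mul_le_mul_of_nonneg_right hC (sq_nonneg p)
          _ = x ^ 2 / 2 := by rw [hxdef]; ring
      have h2 : (0:ℝ) ≤ q ^ (n - 2) := pow_nonneg hq0 _
      calc (n.choose 2 : ℝ) * p ^ 2 * q ^ (n - 2)
          ≤ (x ^ 2 / 2) * q ^ (n - 2) := mul_le_mul_of_nonneg_right hCp h2
        _ ≤ (x ^ 2 / 2) * (E * F) :=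
            mul_le_mul_of_nonneg_left hqn' (by positivity)
    have he2 : Real.exp (-1) ^ 2 ≤ (10 / 27) ^ 2 :=
      pow_le_pow_left₀ (Real.exp_pos _).le he1 2
    have step2 : (x ^ 2 / 2) * (E * F) ≤ 1 := by
      calc (x ^ 2 / 2) * (E * F) = (x ^ 2 * E) * F / 2 := by ring
        _ ≤ (256 / 49 * Real.exp (-1) ^ 2) * F / 2 := by
            have := mul_le_mul_of_nonneg_right haux2 hF0
            linarith
        _ ≤ (256 / 49 * (10 / 27) ^ 2) * 68/25 / 2 := by
            have hb : (0:ℝ) ≤ 256 / 49 * Real.exp (-1) ^ 2 := by positivity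
            have := mul_le_mul (by nlinarith : (256:ℝ)/49 * Real.exp (-1)^2 ≤ 256/49 * (1/2.7)^2) hee hF0 (by norm_num)
            linarith
        _ ≤ 1 := by norm_num
    linarith

theorem stmt_13 {Ω : Type*} [MeasurableSpace Ω] (μ : Measure Ω)
    [IsProbabilityMeasure μ] (n u : ℕ) (hu : 8 ≤ u) (r p : ℝ) (hr : 2 ≤ r)
    (hp0 : 0 < p) (hp : p ≤ 1 / (2 * r))
    (B : Fin n → Ω → Option (Fin u))
    (hind : iIndepFun (m := fun _ => (⊤ : MeasurableSpace (Option (Fin u)))) B μ)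
    (hnone : ∀ i, μ (B i ⁻¹' {none}) = ENNReal.ofReal (1 - p))
    (hsome : ∀ i b, μ (B i ⁻¹' {some b}) = ENNReal.ofReal (p / u))
    (j : Fin u) :
    μ {ω | 2 ≤ (Finset.univ.filter fun i => B i ω = some j).card ∧
        ∀ b : Fin u, b ≠ j → ∀ i, B i ω ≠ some b} ≤
      ENNReal.ofReal (1 / u ^ 2) := by
  classical
  have hp4 : p ≤ 1 / 4 := by
    have h0 : (0:ℝ) < 2 * r := by linarith
    calc p ≤ 1 / (2 * r) := hp
      _ ≤ 1 / 4 := by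
        apply one_div_le_one_div_of_le (by norm_num) (by linarith)
  have hu0 : (0:ℝ) < (u:ℝ) := by
    have : (8:ℝ) ≤ (u:ℝ) := by exact_mod_cast hu
    linarith
  have hq0 : (0:ℝ) ≤ 1 - p := by linarith
  have hpu0 : (0:ℝ) ≤ p / u := by positivity
  set q : ℝ := 1 - p + p / u with hqdef
  set P : Finset (Finset (Fin n)) := Finset.powersetCard 2 Finset.univ with hP
  set T : Finset (Fin n) → Fin n → Set (Option (Fin u)) :=
    fun s i => if i ∈ s then {some j} else {none, some j} with hT
  -- inclusion in union of pair events
  have hsub : {ω | 2 ≤ (Finset.univ.filter fun i => B i ω = some j).card ∧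
        ∀ b : Fin u, b ≠ j → ∀ i, B i ω ≠ some b}
      ⊆ ⋃ s ∈ P, ⋂ i, B i ⁻¹' T s i := by
    rintro ω ⟨h2, hb⟩
    obtain ⟨s, hssub, hscard⟩ := Finset.exists_subset_card_eq h2
    refine Set.mem_iUnion₂.2 ⟨s, Finset.mem_powersetCard.2 ⟨Finset.subset_univ _, hscard⟩, ?_⟩
    refine Set.mem_iInter.2 fun i => ?_
    by_cases hi : i ∈ s
    · have := (Finset.mem_filter.1 (hssub hi)).2
      simp [hT, hi, this]
    · simp only [hT, if_neg hi, Set.mem_preimage, Set.mem_insert_iff, Set.mem_singleton_iff]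
      rcases hB : B i ω with _ | b
      · exact Or.inl rfl
      · right
        by_contra hne
        exact hb b (fun h => hne (by rw [h])) i hB
  -- bound on each pair event
  have hmeas : ∀ s ∈ P, μ (⋂ i, B i ⁻¹' T s i) ≤
      ENNReal.ofReal (p / u) ^ 2 * ENNReal.ofReal q ^ (n - 2) := by
    intro s hs
    obtain ⟨-, hscard⟩ := Finset.mem_powersetCard.1 hs
    have hprod := hind.measure_inter_preimage_eq_mul Finset.univ
      (sets := T s) (fun i _ => trivial)
    have hInter : ⋂ i ∈ Finset.univ, B i ⁻¹' T s i = ⋂ i, B i ⁻¹' T s i := by simp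
    rw [hInter] at hprod
    rw [hprod]
    have hfac : ∀ i ∈ Finset.univ, μ (B i ⁻¹' T s i) ≤
        (if i ∈ s then ENNReal.ofReal (p / u) else ENNReal.ofReal q) := by
      intro i _
      by_cases hi : i ∈ s
      · simp only [hT, if_pos hi]
        exact (hsome i j).le
      · simp only [hT, if_neg hi]
        have hset : ({none, some j} : Set (Option (Fin u))) = {none} ∪ {some j} :=
          Set.insert_eq _ _
        rw [hset, Set.preimage_union]
        calc μ (B i ⁻¹' {none} ∪ B i ⁻¹' {some j})
            ≤ μ (B i ⁻¹' {none}) + μ (B i ⁻¹' {some j}) := measure_union_le _ _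
          _ = ENNReal.ofReal (1 - p) + ENNReal.ofReal (p / u) := by
              rw [hnone, hsome]
          _ = ENNReal.ofReal q := (ENNReal.ofReal_add hq0 hpu0).symm
    calc ∏ i : Fin n, μ (B i ⁻¹' T s i)
        ≤ ∏ i : Fin n, (if i ∈ s then ENNReal.ofReal (p / u) else ENNReal.ofReal q) :=
          Finset.prod_le_prod' hfac
      _ = ENNReal.ofReal (p / u) ^ 2 * ENNReal.ofReal q ^ (n - 2) := by
          rw [Finset.prod_ite, Finset.prod_const, Finset.prod_const]
          have h1 : (Finset.univ.filter fun i => i ∈ s) = s := by ext i; simp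
          have h2 : (Finset.univ.filter fun i => i ∉ s) = sᶜ := by ext i; simp
          rw [h1, h2, hscard, Finset.card_compl, hscard, Fintype.card_fin]
  -- combine
  calc μ {ω | 2 ≤ (Finset.univ.filter fun i => B i ω = some j).card ∧
        ∀ b : Fin u, b ≠ j → ∀ i, B i ω ≠ some b}
      ≤ μ (⋃ s ∈ P, ⋂ i, B i ⁻¹' T s i) := measure_mono hsub
    _ ≤ ∑ s ∈ P, μ (⋂ i, B i ⁻¹' T s i) := measure_biUnion_finset_le P _
    _ ≤ ∑ s ∈ P, ENNReal.ofReal (p / u) ^ 2 * ENNReal.ofReal q ^ (n - 2) :=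
        Finset.sum_le_sum hmeas
    _ = (n.choose 2 : ENNReal) * (ENNReal.ofReal (p / u) ^ 2 * ENNReal.ofReal q ^ (n - 2)) := by
        rw [Finset.sum_const, nsmul_eq_mul, hP, Finset.card_powersetCard,
          Finset.card_univ, Fintype.card_fin]
    _ = ENNReal.ofReal ((n.choose 2 : ℝ) * ((p / u) ^ 2 * q ^ (n - 2))) := by
        rw [ENNReal.ofReal_mul (by positivity), ENNReal.ofReal_mul (by positivity),
          ENNReal.ofReal_pow hpu0, ENNReal.ofReal_pow (by rw [hqdef]; linarith),
          ENNReal.ofReal_natCast]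
    _ ≤ ENNReal.ofReal (1 / u ^ 2) := by
        apply ENNReal.ofReal_le_ofReal
        have hk := real_key n u p (by exact_mod_cast hu) hp0 hp4
        have heq : (n.choose 2 : ℝ) * ((p / u) ^ 2 * q ^ (n - 2))
            = ((n.choose 2 : ℝ) * p ^ 2 * q ^ (n - 2)) / (u : ℝ) ^ 2 := by
          field_simp
        rw [heq]
        rw [hqdef] at *
        gcongr
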